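/- Let (Z_k) be the stationary Markov chain on {0,1} with initial distribution P[Z_0=0] = φ²/(φ²+1), P[Z_0=1] = 1/(φ²+1) and transition probabilities P[Z_{k+1}=0 | Z_k=0] = 1/φ, P[Z_{k+1}=1 | Z_k=0] = 1/φ², P[Z_{k+1}=0 | Z_k=1] = 1, P[Z_{k+1}=1 | Z_k=1] = 0. Then S_n = Z_1 + ... + Z_n satisfies E[S_n] = n/(φ²+1) and Var(S_n) = n·φ³/(φ²+1)³ + 2/25 − (2/25)·(−φ^{-2})^n. -/

import Mathlib

noncomputable def phi : ℝ := (1 + Real.sqrt 5) / 2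

/-- Initial (stationary) distribution of the Markov chain `(Z k)` on `{0,1}`. -/
noncomputable def zInit : Fin 2 → ℝ := fun b =>
  if b = 0 then phi ^ 2 / (phi ^ 2 + 1) else 1 / (phi ^ 2 + 1)

/-- Transition probabilities of the Markov chain `(Z k)` on `{0,1}`. -/
noncomputable def zTrans : Fin 2 → Fin 2 → ℝ := fun a b =>
  if a = 0 then (if b = 0 then 1 / phi else 1 / phi ^ 2)
  else (if b = 0 then 1 else 0)

/-- The probability of the path `(Z 0, …, Z n) = (z 0, …, z n)` of the Markov chain. -/
noncomputable def pathProb (n : ℕ) (z : Fin (n + 1) → Fin 2) : ℝ :=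
  zInit (z 0) * ∏ i : Fin n, zTrans (z i.castSucc) (z i.succ)

/-- The value `S n = Z 1 + ⋯ + Z n` along a path. -/
def pathSum (n : ℕ) (z : Fin (n + 1) → Fin 2) : ℕ := ∑ i : Fin n, (z i.succ : ℕ)

open Finset

noncomputable def PP : ℕ → Fin 2 → ℝ
  | 0, a => zInit a
  | (n+1), b => PP n 0 * zTrans 0 b + PP n 1 * zTrans 1 b

noncomputable def MM : ℕ → Fin 2 → ℝ
  | 0, _ => 0
  | (n+1), b => (MM n 0 + PP n 0 * (b : ℕ)) * zTrans 0 b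
      + (MM n 1 + PP n 1 * (b : ℕ)) * zTrans 1 b

noncomputable def QQ : ℕ → Fin 2 → ℝ
  | 0, _ => 0
  | (n+1), b => (QQ n 0 + 2 * MM n 0 * (b : ℕ) + PP n 0 * (b : ℕ)) * zTrans 0 b
      + (QQ n 1 + 2 * MM n 1 * (b : ℕ) + PP n 1 * (b : ℕ)) * zTrans 1 b

/-- the snoc equivalence -/
def snocEquiv (n : ℕ) : ((Fin (n+1) → Fin 2) × Fin 2) ≃ (Fin (n+2) → Fin 2) where
  toFun p := Fin.snoc p.1 p.2
  invFun z := (fun i => z i.castSucc, z (Fin.last (n+1)))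
  left_inv p := by
    ext i
    · simp
    · simp
  right_inv z := by
    exact Fin.snoc_init_self z

lemma pathProb_snoc (n : ℕ) (z' : Fin (n+1) → Fin 2) (b : Fin 2) :
    pathProb (n+1) (Fin.snoc z' b) = pathProb n z' * zTrans (z' (Fin.last n)) b := by
  unfold pathProb
  rw [Fin.prod_univ_castSucc]
  have h0 : (Fin.snoc z' b : Fin (n+2) → Fin 2) 0 = z' 0 := by
    have : (0 : Fin (n+2)) = Fin.castSucc 0 := rfl
    rw [this, Fin.snoc_castSucc]
  rw [h0]
  have h1 : ∀ i : Fin n, zTrans ((Fin.snoc z' b : Fin (n+2) → Fin 2) (Fin.castSucc i).castSucc)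
      ((Fin.snoc z' b : Fin (n+2) → Fin 2) (Fin.castSucc i).succ)
      = zTrans (z' i.castSucc) (z' i.succ) := by
    intro i
    rw [Fin.snoc_castSucc, Fin.succ_castSucc, Fin.snoc_castSucc]
  rw [Finset.prod_congr rfl (fun i _ => h1 i)]
  have h2 : (Fin.snoc z' b : Fin (n+2) → Fin 2) (Fin.last n).castSucc = z' (Fin.last n) :=
    Fin.snoc_castSucc ..
  have h3 : (Fin.snoc z' b : Fin (n+2) → Fin 2) (Fin.last n).succ = b := by
    rw [Fin.succ_last, Fin.snoc_last]
  rw [h2, h3]; ring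

lemma pathSum_snoc (n : ℕ) (z' : Fin (n+1) → Fin 2) (b : Fin 2) :
    pathSum (n+1) (Fin.snoc z' b) = pathSum n z' + (b : ℕ) := by
  unfold pathSum
  rw [Fin.sum_univ_castSucc]
  congr 1
  · apply Finset.sum_congr rfl
    intro i _
    rw [Fin.succ_castSucc, Fin.snoc_castSucc]
  · rw [Fin.succ_last, Fin.snoc_last]

/-- master reindexing step -/
lemma snoc_step (n : ℕ) (a : Fin 2) (F : ℕ → ℝ) :
    ∑ z : Fin (n+2) → Fin 2, pathProb (n+1) z * F (pathSum (n+1) z)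
        * (if z (Fin.last (n+1)) = a then (1:ℝ) else 0)
    = ∑ z : Fin (n+1) → Fin 2,
        pathProb n z * F (pathSum n z + (a : ℕ)) * zTrans (z (Fin.last n)) a := by
  rw [← Equiv.sum_comp (snocEquiv n)]
  rw [Fintype.sum_prod_type]
  apply Finset.sum_congr rfl
  intro z' _
  have : ∀ b : Fin 2, pathProb (n+1) ((snocEquiv n) (z', b)) * F (pathSum (n+1) ((snocEquiv n) (z', b)))
      * (if ((snocEquiv n) (z', b)) (Fin.last (n+1)) = a then (1:ℝ) else 0)
      = if b = a then pathProb n z' * F (pathSum n z' + (b:ℕ)) * zTrans (z' (Fin.last n)) b else 0 := by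
    intro b
    rw [show ((snocEquiv n) (z', b)) = (Fin.snoc z' b : Fin (n+2) → Fin 2) from rfl]
    have hl : (Fin.snoc z' b : Fin (n+2) → Fin 2) (Fin.last (n+1)) = b := Fin.snoc_last ..
    rw [pathProb_snoc, pathSum_snoc, hl]
    by_cases h : b = a <;> simp [h] <;> ring
  rw [Finset.sum_congr rfl (fun b _ => this b)]
  simp

lemma fin2_expand (c : Fin 2) (f : Fin 2 → ℝ) :
    f c = (if c = 0 then (1:ℝ) else 0) * f 0 + (if c = 1 then 1 else 0) * f 1 := by
  fin_cases c <;> simp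

lemma key (n : ℕ) : ∀ a : Fin 2,
    (∑ z : Fin (n+1) → Fin 2, pathProb n z * (1:ℝ)
        * (if z (Fin.last n) = a then (1:ℝ) else 0) = PP n a)
    ∧ (∑ z : Fin (n+1) → Fin 2, pathProb n z * (pathSum n z : ℝ)
        * (if z (Fin.last n) = a then (1:ℝ) else 0) = MM n a)
    ∧ (∑ z : Fin (n+1) → Fin 2, pathProb n z * (pathSum n z : ℝ)^2
        * (if z (Fin.last n) = a then (1:ℝ) else 0) = QQ n a) := by
  induction n with
  | zero =>
    intro a
    have h : ∀ (F : ℕ → ℝ),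
        ∑ z : Fin 1 → Fin 2, pathProb 0 z * F (pathSum 0 z)
          * (if z (Fin.last 0) = a then (1:ℝ) else 0)
        = zInit a * F 0 := by
      intro F
      rw [← Equiv.sum_comp (Equiv.funUnique (Fin 1) (Fin 2)).symm]
      have : ∀ c : Fin 2, pathProb 0 ((Equiv.funUnique (Fin 1) (Fin 2)).symm c)
          * F (pathSum 0 ((Equiv.funUnique (Fin 1) (Fin 2)).symm c))
          * (if ((Equiv.funUnique (Fin 1) (Fin 2)).symm c) (Fin.last 0) = a then (1:ℝ) else 0)
          = if c = a then zInit c * F 0 else 0 := by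
        intro c
        have h1 : pathProb 0 ((Equiv.funUnique (Fin 1) (Fin 2)).symm c) = zInit c := by
          simp [pathProb, Equiv.funUnique]
        have h2 : pathSum 0 ((Equiv.funUnique (Fin 1) (Fin 2)).symm c) = 0 := by
          simp [pathSum]
        have h3 : ((Equiv.funUnique (Fin 1) (Fin 2)).symm c) (Fin.last 0) = c := rfl
        rw [h1, h2, h3]
        by_cases h : c = a <;> simp [h]
      rw [Finset.sum_congr rfl (fun c _ => this c)]
      simp
    refine ⟨?_, ?_, ?_⟩
    · simpa [PP] using h (fun _ => 1)
    · simpa [MM] using h (fun m => (m : ℝ))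
    · have h2 := h (fun m => (m : ℝ)^2)
      norm_num at h2
      simpa [QQ] using h2
  | succ n ih =>
    intro a
    have hP0 := (ih 0).1; have hP1 := (ih 1).1
    have hM0 := (ih 0).2.1; have hM1 := (ih 1).2.1
    have hQ0 := (ih 0).2.2; have hQ1 := (ih 1).2.2
    have hb2 : ((a : ℕ) : ℝ)^2 = ((a : ℕ) : ℝ) := by fin_cases a <;> norm_num
    refine ⟨?_, ?_, ?_⟩
    · rw [snoc_step n a (fun _ => 1)]
      have : ∀ z : Fin (n+1) → Fin 2,
          pathProb n z * (1:ℝ) * zTrans (z (Fin.last n)) a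
          = (pathProb n z * 1 * (if z (Fin.last n) = 0 then (1:ℝ) else 0)) * zTrans 0 a
            + (pathProb n z * 1 * (if z (Fin.last n) = 1 then (1:ℝ) else 0)) * zTrans 1 a := by
        intro z
        rw [fin2_expand (z (Fin.last n)) (fun c => zTrans c a)]
        ring
      rw [Finset.sum_congr rfl (fun z _ => this z), Finset.sum_add_distrib,
        ← Finset.sum_mul, ← Finset.sum_mul, hP0, hP1]
      show _ = PP n 0 * zTrans 0 a + PP n 1 * zTrans 1 a
      rfl
    · rw [snoc_step n a (fun m => (m : ℝ))]
      have : ∀ z : Fin (n+1) → Fin 2,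
          pathProb n z * ((pathSum n z + (a:ℕ) : ℕ) : ℝ) * zTrans (z (Fin.last n)) a
          = ((pathProb n z * (pathSum n z : ℝ) * (if z (Fin.last n) = 0 then (1:ℝ) else 0))
              + (pathProb n z * 1 * (if z (Fin.last n) = 0 then (1:ℝ) else 0)) * ((a:ℕ):ℝ)) * zTrans 0 a
            + ((pathProb n z * (pathSum n z : ℝ) * (if z (Fin.last n) = 1 then (1:ℝ) else 0))
              + (pathProb n z * 1 * (if z (Fin.last n) = 1 then (1:ℝ) else 0)) * ((a:ℕ):ℝ)) * zTrans 1 a := by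
        intro z
        rw [fin2_expand (z (Fin.last n)) (fun c => zTrans c a)]
        push_cast
        ring
      rw [Finset.sum_congr rfl (fun z _ => this z)]
      simp only [Finset.sum_add_distrib, ← Finset.sum_mul]
      rw [hP0, hP1, hM0, hM1]
      show _ = (MM n 0 + PP n 0 * (a:ℕ)) * zTrans 0 a + (MM n 1 + PP n 1 * (a:ℕ)) * zTrans 1 a
      ring
    · rw [snoc_step n a (fun m => (m : ℝ)^2)]
      have : ∀ z : Fin (n+1) → Fin 2,
          pathProb n z * (((pathSum n z + (a:ℕ) : ℕ) : ℝ))^2 * zTrans (z (Fin.last n)) a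
          = ((pathProb n z * (pathSum n z : ℝ)^2 * (if z (Fin.last n) = 0 then (1:ℝ) else 0))
              + (pathProb n z * (pathSum n z : ℝ) * (if z (Fin.last n) = 0 then (1:ℝ) else 0)) * (2 * ((a:ℕ):ℝ))
              + (pathProb n z * 1 * (if z (Fin.last n) = 0 then (1:ℝ) else 0)) * (((a:ℕ):ℝ))) * zTrans 0 a
            + ((pathProb n z * (pathSum n z : ℝ)^2 * (if z (Fin.last n) = 1 then (1:ℝ) else 0))
              + (pathProb n z * (pathSum n z : ℝ) * (if z (Fin.last n) = 1 then (1:ℝ) else 0)) * (2 * ((a:ℕ):ℝ))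
              + (pathProb n z * 1 * (if z (Fin.last n) = 1 then (1:ℝ) else 0)) * (((a:ℕ):ℝ))) * zTrans 1 a := by
        intro z
        rw [fin2_expand (z (Fin.last n)) (fun c => zTrans c a)]
        push_cast
        linear_combination (pathProb n z * ((if z (Fin.last n) = 0 then (1:ℝ) else 0) * zTrans 0 a + (if z (Fin.last n) = 1 then (1:ℝ) else 0) * zTrans 1 a)) * hb2
      rw [Finset.sum_congr rfl (fun z _ => this z)]
      simp only [Finset.sum_add_distrib, ← Finset.sum_mul]
      rw [hP0, hP1, hM0, hM1, hQ0, hQ1]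
      show _ = (QQ n 0 + 2 * MM n 0 * (a:ℕ) + PP n 0 * (a:ℕ)) * zTrans 0 a
          + (QQ n 1 + 2 * MM n 1 * (a:ℕ) + PP n 1 * (a:ℕ)) * zTrans 1 a
      ring

lemma hs5 : Real.sqrt 5 ^ 2 = 5 := Real.sq_sqrt (by norm_num)

lemma phi_pos : 0 < phi := by
  unfold phi; have := Real.sqrt_nonneg 5; linarith

lemma hphi2 : phi ^ 2 = (3 + Real.sqrt 5) / 2 := by
  unfold phi; linear_combination hs5 / 4

lemma hne2 : (3 + Real.sqrt 5) / 2 + 1 ≠ 0 := by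
  have := Real.sqrt_nonneg 5; intro h; linarith

lemma h1 : 1 / phi = (Real.sqrt 5 - 1) / 2 := by
  rw [div_eq_iff (ne_of_gt phi_pos)]; unfold phi; linear_combination -hs5 / 4

lemma h2 : 1 / phi ^ 2 = (3 - Real.sqrt 5) / 2 := by
  rw [div_eq_iff (pow_ne_zero 2 (ne_of_gt phi_pos))]; rw [hphi2]
  linear_combination hs5 / 4

lemma hzi0 : zInit 0 = 1 / 2 + Real.sqrt 5 / 10 := by
  have h : zInit 0 = phi ^ 2 / (phi ^ 2 + 1) := rfl
  rw [h, hphi2, div_eq_iff hne2]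
  linear_combination -hs5 / 20

lemma hzi1 : zInit 1 = 1 / 2 - Real.sqrt 5 / 10 := by
  have h : zInit 1 = 1 / (phi ^ 2 + 1) := rfl
  rw [h, hphi2, div_eq_iff hne2]
  linear_combination hs5 / 20

lemma T00 : zTrans 0 0 = 1 / phi := rfl
lemma T01 : zTrans 0 1 = 1 / phi ^ 2 := rfl
lemma T10 : zTrans 1 0 = 1 := rfl
lemma T11 : zTrans 1 1 = 0 := rfl

lemma closed (n : ℕ) :
    PP n 0 = 1/2 + Real.sqrt 5/10
  ∧ PP n 1 = 1/2 - Real.sqrt 5/10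
  ∧ MM n 0 = (-1/10 - Real.sqrt 5/50) + (n:ℝ)/5
      + (1/10 + Real.sqrt 5/50) * (-(1/phi^2))^n
  ∧ MM n 1 = (1/10 + Real.sqrt 5/50) + (3/10 - Real.sqrt 5/10)*(n:ℝ)
      + (-1/10 - Real.sqrt 5/50) * (-(1/phi^2))^n
  ∧ QQ n 0 = (1/50 + Real.sqrt 5/250) + (-3/50 + Real.sqrt 5/50)*(n:ℝ)
      + (1/10 - Real.sqrt 5/50)*(n:ℝ)^2
      + (-1/50 - Real.sqrt 5/250) * (-(1/phi^2))^n
      + (3/25 + Real.sqrt 5/25)*(n:ℝ)*(-(1/phi^2))^n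
  ∧ QQ n 1 = (3/50 - Real.sqrt 5/250) + (3/50 + Real.sqrt 5/50)*(n:ℝ)
      + (1/5 - 2*Real.sqrt 5/25)*(n:ℝ)^2
      + (-3/50 + Real.sqrt 5/250) * (-(1/phi^2))^n
      + (-3/25 - Real.sqrt 5/25)*(n:ℝ)*(-(1/phi^2))^n := by
  induction n with
  | zero =>
    refine ⟨?_, ?_, ?_, ?_, ?_, ?_⟩ <;>
      simp only [PP, MM, QQ, Nat.cast_zero, pow_zero] <;>
      first
        | rw [hzi0]
        | rw [hzi1]
        | ring
  | succ n ih =>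
    obtain ⟨c1, c2, c3, c4, c5, c6⟩ := ih
    refine ⟨?_, ?_, ?_, ?_, ?_, ?_⟩
    · simp only [PP]
      rw [T00, T10, c1, c2, h1]
      linear_combination (1/20) * hs5
    · simp only [PP]
      rw [T01, T11, c1, c2]
      rw [h2]
      linear_combination (-1/20) * hs5
    · simp only [MM]
      simp only [Fin.isValue, Fin.val_zero, Nat.cast_zero, mul_zero, add_zero]
      rw [T00, T10, c3, c4, pow_succ (-(1/phi^2)) n, h1, h2]
      push_cast
      linear_combination (-1/100) * hs5
    · simp only [MM]
      simp only [Fin.isValue, Fin.val_one, Nat.cast_one, mul_one]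
      rw [T01, T11, c3, c4, c1, c2, pow_succ (-(1/phi^2)) n, h2]
      push_cast
      linear_combination (-1/25) * hs5
    · simp only [QQ]
      simp only [Fin.isValue, Fin.val_zero, Nat.cast_zero, mul_zero, add_zero]
      rw [T00, T10, c5, c6, pow_succ (-(1/phi^2)) n, h1, h2]
      push_cast
      linear_combination ((1/500) + (-1/50)*(-((3 - Real.sqrt 5)/2))^n
        + (1/100)*(n:ℝ) + (-1/100)*(n:ℝ)^2) * hs5
    · simp only [QQ]
      simp only [Fin.isValue, Fin.val_one, Nat.cast_one, mul_one]
      rw [T01, T11, c5, c6, c3, c4, c1, c2, pow_succ (-(1/phi^2)) n, h2]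
      push_cast
      linear_combination ((-4/125) + (-1/100)*(n:ℝ) + (1/100)*(n:ℝ)^2) * hs5

lemma ind_one (c : Fin 2) :
    (if c = 0 then (1:ℝ) else 0) + (if c = 1 then 1 else 0) = 1 := by
  fin_cases c <;> norm_num

lemma hmeanid (n : ℕ) : (n:ℝ) / (phi^2 + 1) = (n:ℝ) * (5 - Real.sqrt 5) / 10 := by
  rw [hphi2, div_eq_iff hne2]
  linear_combination ((n:ℝ)/20) * hs5

lemma hterm (n : ℕ) : (n:ℝ) * phi^3 / (phi^2 + 1)^3 = (n:ℝ) * Real.sqrt 5 / 25 := by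
  have hphi3 : phi ^ 3 = 2 + Real.sqrt 5 := by
    unfold phi; linear_combination ((Real.sqrt 5 + 3)/8) * hs5
  rw [hphi3, hphi2, div_eq_iff (pow_ne_zero 3 hne2)]
  linear_combination (-((2/5)*(n:ℝ) + (3/40)*Real.sqrt 5*(n:ℝ)
    + (1/200)*Real.sqrt 5^2*(n:ℝ))) * hs5

/-- Mean and variance of `S n = Z 1 + ⋯ + Z n` for the stationary Markov chain:
`E[S n] = n/(φ²+1)` and `Var(S n) = n·φ³/(φ²+1)³ + 2/25 − (2/25)·(−φ^(-2))^n`. -/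
theorem markov_sum_mean_and_variance (n : ℕ) (hn : 1 ≤ n) :
    (∑ z : Fin (n + 1) → Fin 2, pathProb n z * (pathSum n z : ℝ)) =
        (n : ℝ) / (phi ^ 2 + 1) ∧
      (∑ z : Fin (n + 1) → Fin 2,
          pathProb n z * ((pathSum n z : ℝ) - (n : ℝ) / (phi ^ 2 + 1)) ^ 2) =
        (n : ℝ) * phi ^ 3 / (phi ^ 2 + 1) ^ 3 + 2 / 25 -
          (2 / 25) * (-(1 / phi ^ 2)) ^ n := by
  obtain ⟨d1, d2, d3, d4, d5, d6⟩ := closed n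
  constructor
  · have e1 : ∀ z ∈ (Finset.univ : Finset (Fin (n+1) → Fin 2)),
        pathProb n z * (pathSum n z : ℝ)
        = pathProb n z * (pathSum n z : ℝ) * (if z (Fin.last n) = 0 then (1:ℝ) else 0)
          + pathProb n z * (pathSum n z : ℝ) * (if z (Fin.last n) = 1 then (1:ℝ) else 0) := by
      intro z _
      linear_combination (-(pathProb n z * (pathSum n z : ℝ))) * (ind_one (z (Fin.last n)))
    rw [Finset.sum_congr rfl e1, Finset.sum_add_distrib,
      (key n 0).2.1, (key n 1).2.1, d3, d4, hmeanid]
    ring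
  · have e2 : ∀ z ∈ (Finset.univ : Finset (Fin (n+1) → Fin 2)),
        pathProb n z * ((pathSum n z : ℝ) - (n : ℝ) / (phi ^ 2 + 1)) ^ 2
        = (pathProb n z * (pathSum n z : ℝ)^2 * (if z (Fin.last n) = 0 then (1:ℝ) else 0)
            + pathProb n z * (pathSum n z : ℝ)^2 * (if z (Fin.last n) = 1 then (1:ℝ) else 0))
          - ((2 * ((n : ℝ) / (phi ^ 2 + 1)))
                * (pathProb n z * (pathSum n z : ℝ) * (if z (Fin.last n) = 0 then (1:ℝ) else 0))
              + (2 * ((n : ℝ) / (phi ^ 2 + 1)))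
                * (pathProb n z * (pathSum n z : ℝ) * (if z (Fin.last n) = 1 then (1:ℝ) else 0)))
          + (((n : ℝ) / (phi ^ 2 + 1))^2
                * (pathProb n z * 1 * (if z (Fin.last n) = 0 then (1:ℝ) else 0))
              + ((n : ℝ) / (phi ^ 2 + 1))^2
                * (pathProb n z * 1 * (if z (Fin.last n) = 1 then (1:ℝ) else 0))) := by
      intro z _
      linear_combination (-(pathProb n z * ((pathSum n z : ℝ) - (n : ℝ) / (phi ^ 2 + 1)) ^ 2))
        * (ind_one (z (Fin.last n)))
    rw [Finset.sum_congr rfl e2]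
    rw [Finset.sum_add_distrib, Finset.sum_sub_distrib, Finset.sum_add_distrib,
      Finset.sum_add_distrib, Finset.sum_add_distrib,
      ← Finset.mul_sum, ← Finset.mul_sum, ← Finset.mul_sum, ← Finset.mul_sum]
    rw [(key n 0).1, (key n 1).1, (key n 0).2.1, (key n 1).2.1,
      (key n 0).2.2, (key n 1).2.2]
    rw [d1, d2, d3, d4, d5, d6, hmeanid, hterm]
    linear_combination ((-1/100)*(n:ℝ)^2) * hs5
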